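/- Let ξ be a positive quadratic irrational whose regular continued fraction expansion is purely periodic with minimal period (q₁,…,q_l). Then the Denjoy continued fraction expansion of ξ is purely periodic, and its minimal period is obtained from (q₁,…,q_l) by replacing each partial quotient qᵢ by the binary string 1 0 1 0 … 0 1 consisting of qᵢ ones alternating with qᵢ−1 zeroes (regular-to-Denjoy conversion). -/

import Mathlib

/-- A binary quadratic form `A x² + B x y + C y²` with integer coefficients. -/
structure QF where
  a : ℤ
  b : ℤ
  c : ℤ

/-- The discriminant `B² - 4AC` of a form. -/
def QF.disc (f : QF) : ℤ := f.b ^ 2 - 4 * f.a * f.c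

/-- The action of a matrix `[[α, β], [γ, δ]]` on a form:
`f(x,y) ↦ f(αx + βy, γx + δy)`. -/
def QF.transform (f : QF) (α β γ δ : ℤ) : QF :=
  ⟨f.a * α ^ 2 + f.b * α * γ + f.c * γ ^ 2,
   2 * f.a * α * β + f.b * (α * δ + β * γ) + 2 * f.c * γ * δ,
   f.a * β ^ 2 + f.b * β * δ + f.c * δ ^ 2⟩

/-- A form is indefinite if its discriminant is positive and not a perfect square. -/
def QF.IsIndefinite (f : QF) : Prop := 0 < f.disc ∧ ¬ IsSquare f.disc

/-- An indefinite form `(A,B,C)` is Z-reduced if `A,B,C > 0` and `B > A + C`. -/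
def QF.IsZReduced (f : QF) : Prop :=
  f.IsIndefinite ∧ 0 < f.a ∧ 0 < f.b ∧ 0 < f.c ∧ f.a + f.c < f.b

/-- An indefinite form `(A,B,C)` is G-reduced if `AC < 0` and `B > |A + C|`. -/
def QF.IsGReduced (f : QF) : Prop :=
  f.IsIndefinite ∧ f.a * f.c < 0 ∧ |f.a + f.c| < f.b

/-- G-reduced with `A > 0`. -/
def QF.IsGPlus (f : QF) : Prop := f.IsGReduced ∧ 0 < f.a

/-- G-reduced with `A < 0`. -/
def QF.IsGMinus (f : QF) : Prop := f.IsGReduced ∧ f.a < 0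

/-- `(t, u)` is the fundamental solution of `|t² - Δ u²| = 4`:
a solution in positive integers with `u` minimal. -/
def IsFundSol (Δ t u : ℤ) : Prop :=
  0 < t ∧ 0 < u ∧ |t ^ 2 - Δ * u ^ 2| = 4 ∧
    ∀ t' u' : ℤ, 0 < t' → 0 < u' → |t' ^ 2 - Δ * u' ^ 2| = 4 → u ≤ u'

/-- The continuant of a finite sequence of integers. -/
def cont : List ℤ → ℤ
  | [] => 1
  | [q] => q
  | q :: r :: t => q * cont (r :: t) + cont t

/-- `L` is the list of partial quotients of a regular continued fraction expansion of
the rational number `x`: all partial quotients are positive and the value of the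
continued fraction, namely `cont L / cont L.tail`, equals `x`. -/
def IsCF (x : ℚ) (L : List ℤ) : Prop :=
  L ≠ [] ∧ (∀ q ∈ L, 0 < q) ∧ (cont L : ℚ) = x * cont L.tail

/-- The bead sequence `β(f)` of a Z-reduced form `f = (A,B,C)` of discriminant `Δ`:
with `(t,u)` the fundamental solution of `|t² - Δu²| = 4` and `z = (t + Bu)/2`,
it is the continued fraction expansion of `z/(z - Au)` whose number of partial
quotients is even if `t² - Δu² = -4` and odd otherwise. -/
def QF.IsBeta (f : QF) (L : List ℤ) : Prop :=
  ∃ t u : ℤ, IsFundSol f.disc t u ∧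
    IsCF ((((t + f.b * u : ℤ) : ℚ) / 2) / ((((t + f.b * u : ℤ) : ℚ) / 2) - ((f.a * u : ℤ) : ℚ))) L ∧
    (t ^ 2 - f.disc * u ^ 2 = -4 → Even L.length) ∧
    (t ^ 2 - f.disc * u ^ 2 = 4 → Odd L.length)

/-- Dirichlet's map `γ(f)` for `f = (A,B,C)` in `G⁺` of discriminant `Δ`:
with `(t,u)` the fundamental solution of `|t² - Δu²| = 4` and `z = (t + Bu)/2`,
it is the continued fraction expansion of `z/(Au)` whose number of partial
quotients is odd if `t² - Δu² = -4` and even otherwise. -/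
def QF.IsGamma (f : QF) (L : List ℤ) : Prop :=
  ∃ t u : ℤ, IsFundSol f.disc t u ∧
    IsCF ((((t + f.b * u : ℤ) : ℚ) / 2) / ((f.a * u : ℤ) : ℚ)) L ∧
    (t ^ 2 - f.disc * u ^ 2 = -4 → Odd L.length) ∧
    (t ^ 2 - f.disc * u ^ 2 = 4 → Even L.length)

/-- The stars-and-bars map: `(q₁, …, q_l)` is sent to the binary string of length
`q₁ + ⋯ + q_l - 1` whose `j`-th character is `1` exactly at the partial sums
`q₁, q₁ + q₂, …, q₁ + ⋯ + q_{l-1}`. -/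
def sb : List ℤ → List Bool
  | [] => []
  | [q] => List.replicate (q - 1).toNat false
  | q :: r :: t => List.replicate (q - 1).toNat false ++ true :: sb (r :: t)

/-- `σ(f) = sb(β(f))`. -/
def QF.IsSigma (f : QF) (s : List Bool) : Prop :=
  ∃ L : List ℤ, f.IsBeta L ∧ s = sb L

/-- Zagier's reduction operator: `f ↦ f(nx + y, -x)` with `n = ⌈(B + √Δ)/(2A)⌉`. -/
noncomputable def RZ (f : QF) : QF :=
  f.transform ⌈((f.b : ℝ) + Real.sqrt (f.disc : ℝ)) / (2 * (f.a : ℝ))⌉ 1 (-1) 0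

/-- The number `δ` in Gauss's reduction operator: `|δ| = ⌊(B + √Δ)/(2|A|)⌋` with
`δ` having the sign of `A`. -/
noncomputable def gaussDelta (f : QF) : ℤ :=
  f.a.sign * ⌊((f.b : ℝ) + Real.sqrt (f.disc : ℝ)) / (2 * |(f.a : ℝ)|)⌋

/-- Gauss's reduction operator: `f ↦ f(δx + y, -x)`. -/
noncomputable def RG (f : QF) : QF := f.transform (gaussDelta f) 1 (-1) 0

/-- Add `1` to the last entry of a list. -/
def addLast : List ℤ → List ℤ
  | [] => []
  | [q] => [q + 1]
  | q :: r :: t => q :: addLast (r :: t)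

/-- Subtract `1` from the last entry of a list. -/
def subLast : List ℤ → List ℤ
  | [] => []
  | [q] => [q - 1]
  | q :: r :: t => q :: subLast (r :: t)

/-- Subtract `1` from the first entry of a list. -/
def decHead : List ℤ → List ℤ
  | [] => []
  | q :: t => (q - 1) :: t

/-- The operator `T_Z`: `(q₁,…,q_l) ↦ (q₁-1, q₂, …, q_{l-1}, q_l+1)` if `q₁ ≥ 2`;
`(q₂, q₁)` if `q₁ = 1` and `l = 2`; `(q₃, …, q_l, q₂, q₁)` if `q₁ = 1` and `l > 2`. -/
def TZ : List ℤ → List ℤ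
  | [] => []
  | [q] => [q]
  | q :: r :: s => if q = 1 then s ++ [r, 1] else (q - 1) :: addLast (r :: s)

/-- The map `μ` from G-reduced forms to Z-reduced forms. -/
def mu (f : QF) : QF :=
  if 0 < f.a then ⟨f.a, 2 * f.a + f.b, f.a + f.b + f.c⟩
  else ⟨f.a + f.b + f.c, f.b + 2 * f.c, f.c⟩

/-- The section `τ` of `β`: `τ((q₁,…,q_l)) = (A,B,C)` with `A = [q₁-1, q₂, …, q_l]`,
`C = [q₁, …, q_{l-1}, q_l - 1]`, `B = [q₁,…,q_l] + [q₁-1, q₂, …, q_{l-1}, q_l-1]`. -/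
def tau (L : List ℤ) : QF :=
  ⟨cont (decHead L), cont L + cont (subLast (decHead L)), cont (subLast L)⟩

/-- Multiply all coefficients of a form by `u`. -/
def QF.smul (u : ℤ) (f : QF) : QF := ⟨u * f.a, u * f.b, u * f.c⟩

/-- The reversal `(A,B,C)^R = (C,B,A)`. -/
def QF.rev (f : QF) : QF := ⟨f.c, f.b, f.a⟩

/-- The map `ρ((A,B,C)) = (-A, B, -C)`. -/
def rho (f : QF) : QF := ⟨-f.a, f.b, -f.c⟩

/-- A form is primitive if its coefficients have gcd 1. -/
def IsPrimitiveForm (f : QF) : Prop := Int.gcd f.a (Int.gcd f.b f.c) = 1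

/-- `SL₂(ℤ)`-equivalence of forms. -/
def FormEquiv (f g : QF) : Prop :=
  ∃ α β γ δ : ℤ, α * δ - β * γ = 1 ∧ g = f.transform α β γ δ

/-- A nonempty string is primitive if it differs from all of its nontrivial cyclic
shifts. -/
def PrimitiveList {α : Type*} (l : List α) : Prop :=
  l ≠ [] ∧ ∀ n, 0 < n → n < l.length → l.rotate n ≠ l

/-- The continuant `[q₂, …, q_{l-1}]` of the interior of a list, with the convention
that it is `0` for a list of length `≤ 1`. -/
def innerCont (L : List ℤ) : ℤ := if L.length ≤ 1 then 0 else cont (L.tail.dropLast)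

/-- The section `ξ` of `γ`: `ξ((q₁,…,q_l)) = (A,B,C)` with `A = [q₂,…,q_l]`,
`B = [q₁,…,q_l] - [q₂,…,q_{l-1}]`, `C = -[q₁,…,q_{l-1}]`. -/
def xiForm (L : List ℤ) : QF := ⟨cont L.tail, cont L - innerCont L, -(cont L.dropLast)⟩

/-- `p` is the minimal period of the purely periodic sequence `d`. -/
def IsMinPeriod {α : Type*} [Inhabited α] (d : ℕ → α) (p : List α) : Prop :=
  p ≠ [] ∧ (∀ n, d n = p.getD (n % p.length) default) ∧
    ∀ m, 0 < m → (∀ n, d (n + m) = d n) → p.length ≤ m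

/-- `d` is the sequence of partial quotients of the Denjoy continued fraction of `x`
(`true` = quotient 1, `false` = quotient 0): `ξ₀ = x`, `qₙ = 0` if `ξ_{n-1} < 1`,
`qₙ = 1` if `ξ_{n-1} > 1`, and `ξₙ = 1/(ξ_{n-1} - qₙ)`. -/
def IsDenjoySeq (x : ℝ) (d : ℕ → Bool) : Prop :=
  ∃ ξ : ℕ → ℝ, ξ 0 = x ∧
    ∀ n, ((ξ n < 1 ∧ d n = false) ∨ (1 < ξ n ∧ d n = true)) ∧
      ξ (n + 1) = 1 / (ξ n - if d n then 1 else 0)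

/-- `a` is the sequence of partial quotients of the regular continued fraction of `x`. -/
def IsRegCFSeq (x : ℝ) (a : ℕ → ℤ) : Prop :=
  ∃ ξ : ℕ → ℝ, ξ 0 = x ∧ ∀ n, a n = ⌊ξ n⌋ ∧ ξ (n + 1) = 1 / (ξ n - (a n : ℝ))

/-- Regular-to-Denjoy conversion: each partial quotient `q` becomes the string
`1 0 1 0 ⋯ 0 1` of `q` ones alternating with `q - 1` zeroes. -/
def regToDen (L : List ℤ) : List Bool :=
  (L.map fun q => true :: (List.replicate (q - 1).toNat [false, true]).flatten).flatten

/-- Replace each character `0` by the two characters `01`. -/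
def expand01 (s : List Bool) : List Bool :=
  (s.map fun b => if b then [true] else [false, true]).flatten

/-- A quadratic irrational. -/
def IsQuadIrrational (x : ℝ) : Prop :=
  Irrational x ∧ ∃ a b c : ℤ, a ≠ 0 ∧ (a : ℝ) * x ^ 2 + (b : ℝ) * x + (c : ℝ) = 0

namespace Den18

/-- length of the Denjoy block of the k-th regular quotient -/
def blkf (a : ℕ → ℤ) (k : ℕ) : ℕ := 2 * (a k).toNat - 1

/-- starting position of the k-th block -/
def bnd (a : ℕ → ℤ) : ℕ → ℕ
  | 0 => 0
  | k+1 => bnd a k + blkf a k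

/-- block index and offset of position n -/
def idx (a : ℕ → ℤ) : ℕ → ℕ × ℕ
  | 0 => (0, 0)
  | n+1 => if (idx a n).2 + 1 < blkf a (idx a n).1 then ((idx a n).1, (idx a n).2 + 1)
           else ((idx a n).1 + 1, 0)

/-- the Denjoy digit sequence -/
def den (a : ℕ → ℤ) (n : ℕ) : Bool := decide ((idx a n).2 % 2 = 0)

variable {a : ℕ → ℤ}

lemma blk_pos (hpos : ∀ k, 1 ≤ a k) (k : ℕ) : 1 ≤ blkf a k := by
  have h := hpos k
  unfold blkf; omega

lemma toNat_pos (hpos : ∀ k, 1 ≤ a k) (k : ℕ) : 1 ≤ (a k).toNat := by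
  have := hpos k; omega

lemma idx_spec (hpos : ∀ k, 1 ≤ a k) :
    ∀ n, bnd a (idx a n).1 + (idx a n).2 = n ∧ (idx a n).2 < blkf a (idx a n).1 := by
  intro n
  induction n with
  | zero => simp [idx, bnd]; exact blk_pos hpos 0
  | succ n ih =>
    rw [idx]
    split
    · next h => constructor
                · simp; omega
                · simpa using h
    · next h =>
      have : (idx a n).2 + 1 = blkf a (idx a n).1 := by omega
      constructor
      · simp [bnd]; omega
      · simpa using lt_of_lt_of_le Nat.zero_lt_one (blk_pos hpos _)

lemma bnd_mono : Monotone (bnd a) := by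
  apply monotone_nat_of_le_succ
  intro k; simp [bnd]

lemma bnd_strictMono (hpos : ∀ k, 1 ≤ a k) : StrictMono (bnd a) := by
  apply strictMono_nat_of_lt_succ
  intro k; have := blk_pos hpos k; simp [bnd]; omega

lemma idx_unique (hpos : ∀ k, 1 ≤ a k) {n k i : ℕ} (h : n = bnd a k + i)
    (hi : i < blkf a k) : idx a n = (k, i) := by
  obtain ⟨h1, h2⟩ := idx_spec hpos n
  set k' := (idx a n).1 with hk'
  set i' := (idx a n).2 with hi'
  have hkk : k' = k := by
    by_contra hne
    rcases Nat.lt_or_ge k' k with hlt | hge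
    · have : bnd a (k' + 1) ≤ bnd a k := bnd_mono hlt
      have : bnd a k' + blkf a k' ≤ bnd a k := by simpa [bnd] using this
      omega
    · have hlt : k < k' := by omega
      have : bnd a (k + 1) ≤ bnd a k' := bnd_mono hlt
      have : bnd a k + blkf a k ≤ bnd a k' := by simpa [bnd] using this
      omega
  have : i' = i := by rw [hkk] at h1; omega
  rw [Prod.ext_iff]; exact ⟨hkk, this⟩

lemma blk_odd (hpos : ∀ k, 1 ≤ a k) (k : ℕ) : blkf a k % 2 = 1 := by
  have := toNat_pos hpos k; unfold blkf; omega

/-- boundary characterization -/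
lemma bdry_iff (hpos : ∀ k, 1 ≤ a k) (n : ℕ) :
    (den a n = true ∧ den a (n+1) = true) ↔ ∃ k, n + 1 = bnd a (k+1) := by
  constructor
  · rintro ⟨h1, h2⟩
    obtain ⟨hs1, hs2⟩ := idx_spec hpos n
    refine ⟨(idx a n).1, ?_⟩
    by_cases hc : (idx a n).2 + 1 < blkf a (idx a n).1
    · exfalso
      have hid : idx a (n+1) = ((idx a n).1, (idx a n).2 + 1) := by rw [idx]; simp [hc]
      have h1' : (idx a n).2 % 2 = 0 := by simpa [den] using h1
      have h2' : (idx a (n+1)).2 % 2 = 0 := by simpa [den] using h2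
      rw [hid] at h2'; simp at h2'; omega
    · have : (idx a n).2 + 1 = blkf a (idx a n).1 := by omega
      simp [bnd]; omega
  · rintro ⟨k, hk⟩
    have hb : blkf a k % 2 = 1 := blk_odd hpos k
    have h1 : idx a n = (k, blkf a k - 1) := by
      apply idx_unique hpos
      · have : n + 1 = bnd a k + blkf a k := by simpa [bnd] using hk
        have := blk_pos hpos k; omega
      · have := blk_pos hpos k; omega
    have h2 : idx a (n+1) = (k+1, 0) := by
      apply idx_unique hpos
      · simpa [bnd] using hk
      · exact blk_pos hpos (k+1)
    constructor
    · simp [den, h1]; omega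
    · simp [den, h2]

lemma bnd_succ (a : ℕ → ℤ) (k : ℕ) : bnd a (k+1) = bnd a k + blkf a k := rfl

/-- shift lemma: if a is periodic with period l, den is periodic with period bnd a l -/
lemma idx_shift (hpos : ∀ k, 1 ≤ a k) {l : ℕ} (hl : ∀ k, a (k + l) = a k) :
    ∀ n, idx a (n + bnd a l) = ((idx a n).1 + l, (idx a n).2) := by
  have hblk : ∀ k, blkf a (k + l) = blkf a k := by intro k; unfold blkf; rw [hl]
  intro n
  induction n with
  | zero =>
    simp only [Nat.zero_add, idx]
    apply idx_unique hpos
    · omega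
    · exact blk_pos hpos l
  | succ n ih =>
    have h : n + 1 + bnd a l = (n + bnd a l) + 1 := by omega
    rw [h, idx, idx, ih, hblk]
    split <;> simp <;> omega

lemma den_shift (hpos : ∀ k, 1 ≤ a k) {l : ℕ} (hl : ∀ k, a (k + l) = a k) (n : ℕ) :
    den a (n + bnd a l) = den a n := by
  simp [den, idx_shift hpos hl]

/-- general: periods are closed under gcd -/
lemma period_gcd {α : Type*} {f : ℕ → α} :
    ∀ m N, (∀ n, f (n + m) = f n) → (∀ n, f (n + N) = f n) →
      (∀ n, f (n + Nat.gcd m N) = f n) := by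
  intro m
  induction m using Nat.strong_induction_on with
  | _ m ih =>
    intro N hm hN n
    rcases Nat.eq_zero_or_pos m with rfl | hm0
    · simpa [Nat.gcd_zero_left] using hN n
    · rw [Nat.gcd_rec]
      have hmul : ∀ q n', f (n' + m * q) = f n' := by
        intro q
        induction q with
        | zero => simp
        | succ q ihq =>
          intro n'
          rw [Nat.mul_succ, ← Nat.add_assoc, hm]
          exact ihq n'
      have hNm : ∀ n', f (n' + N % m) = f n' := by
        intro n'
        have hdm : N % m + m * (N / m) = N := Nat.mod_add_div N m
        calc f (n' + N % m) = f (n' + N % m + m * (N / m)) := (hmul _ _).symm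
          _ = f (n' + N) := by rw [Nat.add_assoc, hdm]
          _ = f n' := hN n'
      exact ih (N % m) (Nat.mod_lt _ hm0) m hNm hm n

/-- if den-period m is a boundary point bnd a s then a has period s -/
lemma period_of_bdry (hpos : ∀ k, 1 ≤ a k) {m s : ℕ}
    (hm : ∀ n, den a (n + m) = den a n) (hs : m = bnd a s) :
    ∀ k, a (k + s) = a k := by
  have hbd : ∀ j, (∃ k, j + 1 = bnd a (k+1)) ↔ (∃ k, j + m + 1 = bnd a (k+1)) := by
    intro j
    rw [← bdry_iff hpos, ← bdry_iff hpos]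
    rw [hm j, show j + m + 1 = j + 1 + m by omega, hm (j+1)]
  have hband : ∀ k, bnd a (k + s) = bnd a k + m := by
    intro k
    induction k with
    | zero => simp [bnd]; omega
    | succ k ih =>
      have hblk : blkf a (k + s) = blkf a k := by
        have pk := blk_pos hpos k
        have pks := blk_pos hpos (k+s)
        obtain ⟨k1, hk1⟩ := (hbd (bnd a k + blkf a k - 1)).mp
          ⟨k, by rw [bnd_succ]; omega⟩
        obtain ⟨k2, hk2⟩ := (hbd (bnd a k + blkf a (k+s) - 1)).mpr
          ⟨k + s, by rw [bnd_succ]; omega⟩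
        -- hk1 : bnd a k + blkf a k - 1 + m + 1 = bnd a (k1+1)
        -- hk2 : bnd a k + blkf a (k+s) - 1 + 1 = bnd a (k2+1)
        have e1 : bnd a (k+s) + blkf a k = bnd a (k1+1) := by omega
        have e2 : bnd a k + blkf a (k+s) = bnd a (k2+1) := by omega
        have hA : blkf a (k+s) ≤ blkf a k := by
          have hlt : k + s < k1 + 1 := by
            by_contra hcon
            have := bnd_mono (a:=a) (show k1 + 1 ≤ k + s by omega)
            omega
          have h5 : bnd a (k+s+1) ≤ bnd a (k1+1) := bnd_mono hlt
          have e3 := bnd_succ a (k+s)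
          omega
        have hB : blkf a k ≤ blkf a (k+s) := by
          have hlt : k < k2 + 1 := by
            by_contra hcon
            have := bnd_mono (a:=a) (show k2 + 1 ≤ k by omega)
            omega
          have h5 : bnd a (k+1) ≤ bnd a (k2+1) := bnd_mono hlt
          have e3 := bnd_succ a k
          omega
        omega
      have e1 := bnd_succ a (k+s)
      have e2 := bnd_succ a k
      have e3 : k + 1 + s = (k + s) + 1 := by omega
      rw [e3, e1, e2]; omega
  intro k
  have h1 := hband k
  have h2 := hband (k+1)
  have e1 := bnd_succ a (k+s)
  have e2 := bnd_succ a k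
  have e3 : k + 1 + s = (k + s) + 1 := by omega
  rw [e3, e1] at h2
  rw [e2] at h2
  have hblk : blkf a (k + s) = blkf a k := by omega
  have p1 := hpos k; have p2 := hpos (k+s)
  unfold blkf at hblk; omega

/-! list part -/

lemma regToDen_cons (q : ℤ) (M : List ℤ) :
    regToDen (q :: M) =
      (true :: (List.replicate (q - 1).toNat [false, true]).flatten) ++ regToDen M := by
  simp [regToDen]

lemma rep_flatten_length (t : ℕ) :
    ((List.replicate t ([false, true] : List Bool)).flatten).length = 2 * t := by
  induction t with
  | zero => simp
  | succ t ih => simp [List.replicate_succ, ih]; omega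

lemma rep_flatten_getD (t : ℕ) : ∀ i, i < 2 * t →
    ((List.replicate t ([false, true] : List Bool)).flatten).getD i false = decide (i % 2 = 1) := by
  induction t with
  | zero => intro i hi; omega
  | succ t ih =>
    intro i hi
    rw [List.replicate_succ, List.flatten_cons]
    match i with
    | 0 => simp
    | 1 => simp
    | (i+2) =>
      have : ([false, true] ++ (List.replicate t ([false, true] : List Bool)).flatten).getD (i+2) false
          = ((List.replicate t ([false, true] : List Bool)).flatten).getD i false := by
        rw [List.getD_append_right] <;> simp
      rw [this, ih i (by omega)]
      congr 1
      simp [Nat.add_mod_right]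

lemma block_length {q : ℤ} (hq : 1 ≤ q) :
    (true :: (List.replicate (q - 1).toNat [false, true]).flatten).length = 2 * q.toNat - 1 := by
  simp [rep_flatten_length]
  omega

lemma block_getD {q : ℤ} (hq : 1 ≤ q) {i : ℕ} (hi : i < 2 * q.toNat - 1) :
    (true :: (List.replicate (q - 1).toNat [false, true]).flatten).getD i false
      = decide (i % 2 = 0) := by
  match i with
  | 0 => simp
  | (i+1) =>
    have h : (true :: (List.replicate (q-1).toNat [false, true]).flatten).getD (i+1) false
        = ((List.replicate (q-1).toNat [false, true]).flatten).getD i false := by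
      simp
    rw [h, rep_flatten_getD _ i (by omega)]
    congr 1
    simp [Nat.succ_mod_two_eq_zero_iff]

lemma bnd_shift_fun (a : ℕ → ℤ) (k : ℕ) :
    bnd a (k + 1) = blkf a 0 + bnd (fun j => a (j + 1)) k := by
  induction k with
  | zero => simp [bnd]
  | succ k ih =>
    rw [bnd_succ, ih, bnd_succ]
    have : blkf (fun j => a (j+1)) k = blkf a (k+1) := rfl
    omega

lemma regToDen_length : ∀ (M : List ℤ), (∀ q ∈ M, 1 ≤ q) → ∀ (a : ℕ → ℤ),
    (∀ j, j < M.length → a j = M.getD j 0) → (regToDen M).length = bnd a M.length := by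
  intro M
  induction M with
  | nil => intro _ a _; simp [regToDen, bnd]
  | cons q M ih =>
    intro hM a hag
    rw [regToDen_cons]
    have ha0 : a 0 = q := by simpa using hag 0 (by simp)
    have hq : 1 ≤ q := hM q (by simp)
    rw [List.length_append, block_length hq,
      ih (fun r hr => hM r (by simp [hr])) (fun j => a (j+1))
        (fun j hj => by simpa using hag (j+1) (by simpa using hj))]
    have h2 : (q::M).length = M.length + 1 := rfl
    rw [h2, bnd_shift_fun]
    have hb : blkf a 0 = 2 * q.toNat - 1 := by unfold blkf; rw [ha0]
    omega

lemma regToDen_getD : ∀ (M : List ℤ), (∀ q ∈ M, 1 ≤ q) → ∀ (a : ℕ → ℤ),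
    (∀ j, j < M.length → a j = M.getD j 0) → ∀ k i, k < M.length → i < blkf a k →
    (regToDen M).getD (bnd a k + i) false = decide (i % 2 = 0) := by
  intro M
  induction M with
  | nil => intro _ a _ k i hk; simp at hk
  | cons q M ih =>
    intro hM a hag k i hk hi
    have ha0 : a 0 = q := by simpa using hag 0 (by simp)
    have hq : 1 ≤ q := hM q (by simp)
    have hb : blkf a 0 = 2 * q.toNat - 1 := by unfold blkf; rw [ha0]
    rw [regToDen_cons]
    match k with
    | 0 =>
      have hlen : i < (true :: (List.replicate (q - 1).toNat [false, true]).flatten).length := by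
        rw [block_length hq]; omega
      rw [show bnd a 0 + i = i from by simp [bnd]]
      rw [List.getD_append _ _ _ _ hlen]
      exact block_getD hq (by omega)
    | (k+1) =>
      have hlen := block_length hq
      have hbs := bnd_shift_fun a k
      have harr : bnd a (k+1) + i =
          (true :: (List.replicate (q - 1).toNat [false, true]).flatten).length
            + (bnd (fun j => a (j+1)) k + i) := by
        rw [hlen, hbs]; omega
      rw [harr, List.getD_append_right _ _ _ _ (by omega)]
      rw [show (true :: (List.replicate (q - 1).toNat [false, true]).flatten).length +
          (bnd (fun j => a (j+1)) k + i) -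
          (true :: (List.replicate (q - 1).toNat [false, true]).flatten).length
          = bnd (fun j => a (j+1)) k + i from by omega]
      exact ih (fun r hr => hM r (by simp [hr])) (fun j => a (j+1))
        (fun j hj => by simpa using hag (j+1) (by simpa using hj)) k i
        (by simpa using hk) hi

end Den18

/-- **Theorem (regular-to-Denjoy conversion).** If `x > 0` is a quadratic
irrational whose regular continued fraction is purely periodic with minimal
period `Q`, then the Denjoy continued fraction of `x` is purely periodic with
minimal period obtained from `Q` by regular-to-Denjoy conversion. -/

theorem stmt18 (x : ℝ) (hx : 0 < x) (hquad : IsQuadIrrational x)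
    (a : ℕ → ℤ) (Q : List ℤ) (ha : IsRegCFSeq x a) (hQ : IsMinPeriod a Q) :
    ∃ d : ℕ → Bool, IsDenjoySeq x d ∧ IsMinPeriod d (regToDen Q) := by
  obtain ⟨hxirr, -⟩ := hquad
  obtain ⟨ξ, hξ0, hξ⟩ := ha
  obtain ⟨hQne, hQper, hQmin⟩ := hQ
  set l := Q.length with hl
  have hlpos : 0 < l := List.length_pos_iff.mpr hQne
  have hirr : ∀ n, Irrational (ξ n) := by
    intro n; induction n with
    | zero => rwa [hξ0]
    | succ n ihn =>
      rw [(hξ n).2, one_div]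
      exact (Irrational.sub_intCast ihn (a n)).inv
  have hfl : ∀ n, (a n : ℝ) < ξ n ∧ ξ n < a n + 1 := by
    intro n
    have h := (hξ n).1
    constructor
    · have hle : ((a n : ℤ) : ℝ) ≤ ξ n := by rw [h]; exact Int.floor_le (ξ n)
      exact lt_of_le_of_ne hle (Ne.symm ((hirr n).ne_int (a n)))
    · have := Int.lt_floor_add_one (ξ n)
      rw [← h] at this; exact_mod_cast this
  have hposr : ∀ n, 1 ≤ a (n + 1) := by
    intro n
    have hstep := (hξ n).2
    obtain ⟨h1, h2⟩ := hfl n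
    have ht : 0 < ξ n - a n := by linarith
    have hgt : 1 < ξ (n + 1) := by
      rw [hstep, one_lt_div ht]; linarith
    have hfloor : (1 : ℤ) ≤ ⌊ξ (n+1)⌋ := by
      apply Int.le_floor.mpr; exact_mod_cast hgt.le
    rw [(hξ (n+1)).1]; exact hfloor
  have hpos : ∀ n, 1 ≤ a n := by
    intro n
    cases n with
    | succ n => exact hposr n
    | zero =>
      have h1 := hQper 0
      have h2 := hQper l
      rw [Nat.zero_mod] at h1
      rw [Nat.mod_self] at h2
      have h3 := hposr (l - 1)
      rw [show l - 1 + 1 = l by omega] at h3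
      rw [h1, ← h2]; exact h3
  have hag : ∀ j, j < l → a j = Q.getD j 0 := by
    intro j hj
    have := hQper j; rwa [Nat.mod_eq_of_lt hj] at this
  have hQent : ∀ q ∈ Q, 1 ≤ q := by
    intro q hq
    obtain ⟨k, hk, rfl⟩ := List.mem_iff_getElem.mp hq
    have h := hpos k
    rwa [hag k hk, List.getD_eq_getElem Q 0 hk] at h
  have hal : ∀ k, a (k + l) = a k := by
    intro k
    rw [hQper (k + l), hQper k, Nat.add_mod_right]
  set N := Den18.bnd a l with hNdef
  have hlen : (regToDen Q).length = N := Den18.regToDen_length Q hQent a hag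
  have hNpos : 0 < N := by
    have h1 : Den18.bnd a 1 ≤ Den18.bnd a l := Den18.bnd_mono hlpos
    have h2 : Den18.bnd a 1 = Den18.blkf a 0 := by simp [Den18.bnd]
    have := Den18.blk_pos hpos 0
    omega
  have hden_per : ∀ n, Den18.den a (n + N) = Den18.den a n := Den18.den_shift hpos hal
  have hden_mul : ∀ q n, Den18.den a (n + N * q) = Den18.den a n := by
    intro q
    induction q with
    | zero => simp
    | succ q ihq =>
      intro n
      rw [Nat.mul_succ, ← Nat.add_assoc, show n + N * q + N = (n + N * q) + N from rfl,
        hden_per, ihq]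
  have hklt : ∀ n, n < N → (Den18.idx a n).1 < l := by
    intro n hn
    obtain ⟨hs1, hs2⟩ := Den18.idx_spec hpos n
    by_contra hcon
    have := Den18.bnd_mono (a := a) (show l ≤ (Den18.idx a n).1 by omega)
    omega
  have hdenP : ∀ n, Den18.den a n = (regToDen Q).getD (n % (regToDen Q).length) default := by
    intro n
    rw [hlen]
    have hmod : n % N + N * (n / N) = n := Nat.mod_add_div n N
    have h1 : Den18.den a n = Den18.den a (n % N) := by
      conv_lhs => rw [← hmod]
      exact hden_mul _ _
    rw [h1]
    obtain ⟨hs1, hs2⟩ := Den18.idx_spec hpos (n % N)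
    have hk : (Den18.idx a (n % N)).1 < l := hklt _ (Nat.mod_lt n hNpos)
    have := Den18.regToDen_getD Q hQent a hag (Den18.idx a (n % N)).1 (Den18.idx a (n % N)).2 hk hs2
    rw [hs1] at this
    rw [show (default : Bool) = false from rfl, this]
    rfl
  refine ⟨Den18.den a, ?_, ?_, hdenP, ?_⟩
  · -- IsDenjoySeq
    refine ⟨fun n => if (Den18.idx a n).2 % 2 = 0
        then ξ (Den18.idx a n).1 - ((Den18.idx a n).2 / 2 : ℕ)
        else (ξ (Den18.idx a n).1 - (((Den18.idx a n).2 + 1) / 2 : ℕ))⁻¹, ?_, ?_⟩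
    · simp [Den18.idx, hξ0]
    · intro n
      beta_reduce
      obtain ⟨hs1, hs2⟩ := Den18.idx_spec hpos n
      set k := (Den18.idx a n).1 with hkdef
      set i := (Den18.idx a n).2 with hidef
      have hsucc : Den18.idx a (n+1) = if i + 1 < Den18.blkf a k then (k, i + 1) else (k + 1, 0) := by
        rw [Den18.idx]
      set A := (a k).toNat with hAdef
      have hA1 : 1 ≤ A := by have := hpos k; omega
      have hAcast : ((A : ℕ) : ℝ) = ((a k : ℤ) : ℝ) := by
        have : ((a k).toNat : ℤ) = a k := Int.toNat_of_nonneg (by have := hpos k; omega)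
        exact_mod_cast this
      have hblk : Den18.blkf a k = 2 * A - 1 := rfl
      obtain ⟨hfl1, hfl2⟩ := hfl k
      by_cases hi2 : i % 2 = 0
      · -- even offset
        set j := i / 2 with hjdef
        have hij : i = 2 * j := by omega
        have hjA : j + 1 ≤ A := by omega
        have hjR : (j : ℝ) + 1 ≤ (A : ℝ) := by exact_mod_cast hjA
        have hgt : 1 < ξ k - (j : ℝ) := by
          rw [← hAcast] at hfl1; linarith
        have hdn : Den18.den a n = true := by simp [Den18.den, ← hidef, hi2]
        constructor
        · right
          constructor
          · simpa [hi2] using hgt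
          · exact hdn
        · rw [hdn]
          simp only [if_pos hi2, if_true]
          by_cases hlt : i + 1 < Den18.blkf a k
          · have hid1 : Den18.idx a (n+1) = (k, i+1) := by rw [hsucc, if_pos hlt]
            have hodd : (i + 1) % 2 = 1 := by omega
            have hdiv : (i + 1 + 1) / 2 = j + 1 := by omega
            rw [hid1]
            simp only [hodd]
            norm_num [hdiv]
            ring
          · have hid1 : Den18.idx a (n+1) = (k+1, 0) := by rw [hsucc, if_neg hlt]
            have hie : i = 2 * A - 2 := by omega
            have hje : j = A - 1 := by omega
            rw [hid1]
            norm_num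
            rw [(hξ k).2]
            congr 1
            rw [hje]
            have : ((A - 1 : ℕ) : ℝ) = (A : ℝ) - 1 := by
              have : (1:ℕ) ≤ A := hA1
              push_cast [Nat.cast_sub hA1]
              ring
            rw [this, ← hAcast]
            ring
      · -- odd offset
        have hi1 : i % 2 = 1 := by omega
        set j := (i + 1) / 2 with hjdef
        have hij : i + 1 = 2 * j := by omega
        have hiub : i ≤ 2 * A - 3 := by omega
        have hjA : j + 1 ≤ A := by omega
        have hjR : (j : ℝ) + 1 ≤ (A : ℝ) := by exact_mod_cast hjA
        have hgt : 1 < ξ k - (j : ℝ) := by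
          rw [← hAcast] at hfl1; linarith
        have hw0 : (0:ℝ) < ξ k - (j : ℝ) := by linarith
        have hdn : Den18.den a n = false := by simp [Den18.den, ← hidef, hi1]
        have hval : (ξ k - (j:ℝ))⁻¹ < 1 := by
          rw [inv_lt_one_iff₀]; right; exact hgt
        constructor
        · left
          constructor
          · simpa [hi2] using hval
          · exact hdn
        · rw [hdn]
          simp only [if_neg hi2, if_false]
          have hlt : i + 1 < Den18.blkf a k := by omega
          have hid1 : Den18.idx a (n+1) = (k, i+1) := by rw [hsucc, if_pos hlt]
          have heven : (i + 1) % 2 = 0 := by omega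
          rw [hid1]
          norm_num [heven]
          omega
  · -- P nonempty
    intro h
    rw [h] at hlen
    simp at hlen
    omega
  · -- minimality
    intro m hm hper
    rw [hlen]
    set g := Nat.gcd m N with hgdef
    have hgper : ∀ n, Den18.den a (n + g) = Den18.den a n :=
      Den18.period_gcd m N hper hden_per
    have hg0 : 0 < g := Nat.gcd_pos_of_pos_left _ hm
    have hgm : g ≤ m := Nat.le_of_dvd hm (Nat.gcd_dvd_left m N)
    have hgN : g ∣ N := Nat.gcd_dvd_right m N
    suffices hNg : N ≤ g by omega
    have hgleN : g ≤ N := Nat.le_of_dvd hNpos hgN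
    have hd0 : Den18.den a 0 = true := by simp [Den18.den, Den18.idx]
    have hdN1 : Den18.den a (N - 1) = true := by
      have hbl := Den18.blk_pos hpos (l-1)
      have hodd := Den18.blk_odd hpos (l-1)
      have hidx : Den18.idx a (N-1) = (l-1, Den18.blkf a (l-1) - 1) := by
        apply Den18.idx_unique hpos
        · have hNb := Den18.bnd_succ a (l-1)
          rw [show l - 1 + 1 = l by omega] at hNb
          omega
        · omega
      simp [Den18.den, hidx]
      omega
    have hdg : Den18.den a g = true := by
      have := hgper 0; rw [Nat.zero_add] at this; rw [this, hd0]
    have hgmul : ∀ t n, Den18.den a (n + g * t) = Den18.den a n := by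
      intro t
      induction t with
      | zero => simp
      | succ t iht =>
        intro n
        rw [Nat.mul_succ, ← Nat.add_assoc, hgper, iht]
    have hdg1 : Den18.den a (g - 1) = true := by
      obtain ⟨c, hc⟩ := hgN
      have hc1 : 1 ≤ c := by
        rcases Nat.eq_zero_or_pos c with rfl | h; · omega
        · exact h
      have hmc : g * (c - 1) + g = g * c := by
        rw [← Nat.mul_succ]; congr 1; omega
      have he : g - 1 + g * (c - 1) = N - 1 := by omega
      rw [← hdN1, ← he, hgmul]
    obtain ⟨kk, hkk⟩ := (Den18.bdry_iff hpos (g-1)).mp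
      ⟨hdg1, by rwa [show g - 1 + 1 = g by omega]⟩
    rw [show g - 1 + 1 = g by omega] at hkk
    have hsper : ∀ n, a (n + (kk + 1)) = a n :=
      Den18.period_of_bdry hpos hgper hkk
    have hlle : l ≤ kk + 1 := hQmin (kk + 1) (by omega) hsper
    have : Den18.bnd a l ≤ Den18.bnd a (kk + 1) := Den18.bnd_mono hlle
    omega
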